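/- Let A₀, A₁, …, A_l be real n×n matrices, q ∈ [0,1], and p₁, …, p_l ≥ 0 with Σⱼ pⱼ = 1. Consider the random switched linear system X_{k+1} = A₀ X_k with probability q and X_{k+1} = A_{θ_k} X_k with probability (1−q)pⱼ for θ_k = j, where the switching indices are i.i.d. and independent of the initial state X₀, which is square-integrable. If there exists a real symmetric positive-definite matrix Q with A₀ᵀQA₀ − Q negative definite and Σⱼ pⱼ·AⱼᵀQAⱼ − Q negative definite, then the system is mean-square stable: E[‖X_k‖²] → 0 as k → ∞. -/

import Mathlib

open Matrix MeasureTheory ProbabilityTheory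



namespace SwitchedAux

variable {n : ℕ}

/-- quadratic form of a matrix -/
noncomputable def qf (B : Matrix (Fin n) (Fin n) ℝ) (x : Fin n → ℝ) : ℝ := x ⬝ᵥ B.mulVec x

lemma continuous_qf (B : Matrix (Fin n) (Fin n) ℝ) : Continuous (qf B) := by
  unfold qf Matrix.mulVec dotProduct
  apply continuous_finset_sum
  intro i _
  exact (continuous_apply i).mul
    (continuous_finset_sum _ fun j _ => continuous_const.mul (continuous_apply j))

lemma qf_smul (B : Matrix (Fin n) (Fin n) ℝ) (c : ℝ) (x : Fin n → ℝ) :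
    qf B (c • x) = c ^ 2 * qf B x := by
  unfold qf
  rw [Matrix.mulVec_smul, dotProduct_smul, smul_dotProduct]
  simp [smul_eq_mul]; ring

lemma qf_conj (M Q : Matrix (Fin n) (Fin n) ℝ) (x : Fin n → ℝ) :
    qf (Mᵀ * Q * M) x = qf Q (M.mulVec x) := by
  unfold qf
  rw [← Matrix.mulVec_mulVec, ← Matrix.mulVec_mulVec, Matrix.dotProduct_mulVec,
    Matrix.vecMul_transpose]

lemma qf_sub (B C : Matrix (Fin n) (Fin n) ℝ) (x : Fin n → ℝ) :
    qf (B - C) x = qf B x - qf C x := by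
  unfold qf
  rw [Matrix.sub_mulVec, dotProduct_sub]

lemma qf_sum {α : Type*} [DecidableEq α] (s : Finset α) (c : α → ℝ) (B : α → Matrix (Fin n) (Fin n) ℝ)
    (x : Fin n → ℝ) : qf (∑ v ∈ s, c v • B v) x = ∑ v ∈ s, c v * qf (B v) x := by
  induction s using Finset.induction with
  | empty => simp [qf]
  | insert _ _ h ih =>
      rw [Finset.sum_insert h, Finset.sum_insert h, ← ih]
      unfold qf
      rw [Matrix.add_mulVec, dotProduct_add, Matrix.smul_mulVec,
        dotProduct_smul, smul_eq_mul]

lemma abs_qf_le (B : Matrix (Fin n) (Fin n) ℝ) (x : Fin n → ℝ) :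
    |qf B x| ≤ (∑ i, ∑ j, |B i j|) * ∑ i, (x i) ^ 2 := by
  unfold qf Matrix.mulVec dotProduct
  calc |∑ i, x i * ∑ j, B i j * x j| ≤ ∑ i, |x i * ∑ j, B i j * x j| :=
        Finset.abs_sum_le_sum_abs _ _
    _ ≤ ∑ i, ∑ j, |B i j| * (∑ m, (x m) ^ 2) := by
        apply Finset.sum_le_sum
        intro i _
        rw [abs_mul]
        calc |x i| * |∑ j, B i j * x j| ≤ |x i| * ∑ j, |B i j * x j| :=
              mul_le_mul_of_nonneg_left (Finset.abs_sum_le_sum_abs _ _) (abs_nonneg _)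
          _ = ∑ j, |B i j| * (|x i| * |x j|) := by
              rw [Finset.mul_sum]; congr 1; ext j; rw [abs_mul]; ring
          _ ≤ ∑ j, |B i j| * (∑ m, (x m) ^ 2) := by
              apply Finset.sum_le_sum
              intro j _
              apply mul_le_mul_of_nonneg_left _ (abs_nonneg _)
              have h2 : |x i| * |x j| ≤ ((x i) ^ 2 + (x j) ^ 2) / 2 := by
                nlinarith [sq_nonneg (|x i| - |x j|), sq_abs (x i), sq_abs (x j)]
              refine h2.trans ?_
              have hi : (x i) ^ 2 ≤ ∑ m, (x m) ^ 2 :=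
                Finset.single_le_sum (fun m _ => sq_nonneg (x m)) (Finset.mem_univ i)
              have hj : (x j) ^ 2 ≤ ∑ m, (x m) ^ 2 :=
                Finset.single_le_sum (fun m _ => sq_nonneg (x m)) (Finset.mem_univ j)
              linarith
    _ = (∑ i, ∑ j, |B i j|) * ∑ i, (x i) ^ 2 := by
        rw [Finset.sum_mul]; congr 1; ext i; rw [Finset.sum_mul]

lemma norm_mulVec_le (M : Matrix (Fin n) (Fin n) ℝ) (x : Fin n → ℝ) :
    ‖M.mulVec x‖ ≤ (∑ i, ∑ j, |M i j|) * ‖x‖ := by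
  have hC : (0:ℝ) ≤ (∑ i, ∑ j, |M i j|) * ‖x‖ :=
    mul_nonneg (Finset.sum_nonneg fun i _ => Finset.sum_nonneg fun j _ => abs_nonneg _)
      (norm_nonneg _)
  rw [pi_norm_le_iff_of_nonneg hC]
  intro i
  rw [Real.norm_eq_abs]
  calc |M.mulVec x i| = |∑ j, M i j * x j| := rfl
    _ ≤ ∑ j, |M i j * x j| := Finset.abs_sum_le_sum_abs _ _
    _ ≤ ∑ j, |M i j| * ‖x‖ := by
        apply Finset.sum_le_sum
        intro j _
        rw [abs_mul]
        exact mul_le_mul_of_nonneg_left (norm_le_pi_norm x j) (abs_nonneg _)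
    _ = (∑ j, |M i j|) * ‖x‖ := by rw [Finset.sum_mul]
    _ ≤ (∑ i, ∑ j, |M i j|) * ‖x‖ := by
        apply mul_le_mul_of_nonneg_right _ (norm_nonneg _)
        exact Finset.single_le_sum
          (fun i _ => Finset.sum_nonneg fun j _ => abs_nonneg (M i j)) (Finset.mem_univ i)

end SwitchedAux

namespace SwitchedAux

variable {n : ℕ}

/-- Scale an inequality between quadratic-type functions from the unit sphere to all vectors. -/
lemma le_of_sphere {f g : (Fin n → ℝ) → ℝ}
    (hf : ∀ (c : ℝ) x, f (c • x) = c ^ 2 * f x) (hg : ∀ (c : ℝ) x, g (c • x) = c ^ 2 * g x)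
    (h : ∀ x ∈ Metric.sphere (0 : Fin n → ℝ) 1, f x ≤ g x) (h0 : f 0 ≤ g 0) :
    ∀ x, f x ≤ g x := by
  intro x
  rcases eq_or_ne x 0 with rfl | hx
  · exact h0
  · have hnx : ‖x‖ ≠ 0 := norm_ne_zero_iff.mpr hx
    set u := ‖x‖⁻¹ • x with hu
    have hus : u ∈ Metric.sphere (0 : Fin n → ℝ) 1 := by
      simp only [Metric.mem_sphere, dist_zero_right, hu, norm_smul, norm_inv, norm_norm]
      field_simp
    have hxu : x = ‖x‖ • u := by
      rw [hu, smul_smul, mul_inv_cancel₀ hnx, one_smul]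
    have hfg := h u hus
    calc f x = ‖x‖ ^ 2 * f u := by
          conv_lhs => rw [hxu]
          exact hf _ _
      _ ≤ ‖x‖ ^ 2 * g u := mul_le_mul_of_nonneg_left hfg (sq_nonneg _)
      _ = g x := by
          conv_rhs => rw [hxu]
          exact (hg _ _).symm

lemma exists_ratio (S Q : Matrix (Fin n) (Fin n) ℝ)
    (hQ : ∀ x : Fin n → ℝ, x ≠ 0 → 0 < qf Q x) (hS0 : ∀ x, 0 ≤ qf S x)
    (hlt : ∀ x : Fin n → ℝ, x ≠ 0 → qf S x < qf Q x) :
    ∃ ρ : ℝ, 0 ≤ ρ ∧ ρ < 1 ∧ ∀ x, qf S x ≤ ρ * qf Q x := by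
  rcases Nat.eq_zero_or_pos n with hn | hn
  · refine ⟨0, le_refl _, one_pos, fun x => ?_⟩
    have hx0 : x = 0 := by funext i; exact absurd i.2 (by omega)
    subst hx0
    simp [qf]
  · have hne : Nonempty (Fin n) := ⟨⟨0, hn⟩⟩
    have : Nontrivial (Fin n → ℝ) := by infer_instance
    have hsc : IsCompact (Metric.sphere (0 : Fin n → ℝ) 1) := isCompact_sphere _ _
    have hsne : (Metric.sphere (0 : Fin n → ℝ) 1).Nonempty :=
      NormedSpace.sphere_nonempty.mpr zero_le_one
    obtain ⟨a, has, ha'⟩ := hsc.exists_isMinOn hsne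
      ((continuous_qf Q).sub (continuous_qf S)).continuousOn
    have ha := isMinOn_iff.mp ha'
    obtain ⟨b, hbs, hb'⟩ := hsc.exists_isMaxOn hsne (continuous_qf Q).continuousOn
    have hb := isMaxOn_iff.mp hb'
    have hane : a ≠ 0 := by
      intro h; rw [h] at has; simpa using (Metric.mem_sphere.mp has)
    have hbne : b ≠ 0 := by
      intro h; rw [h] at hbs; simpa using (Metric.mem_sphere.mp hbs)
    have hδ : 0 < qf Q a - qf S a := sub_pos.mpr (hlt a hane)
    have hM : 0 < qf Q b := hQ b hbne
    set δ := qf Q a - qf S a with hδdef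
    set M := qf Q b with hMdef
    have hδM : δ ≤ M := by
      have h1 : 0 ≤ qf S a := hS0 a
      have h2 := hb a has
      simp only [hδdef, hMdef] at *
      linarith
    refine ⟨1 - δ / M, ?_, ?_, ?_⟩
    · have : δ / M ≤ 1 := (div_le_one hM).mpr hδM
      linarith
    · have : 0 < δ / M := div_pos hδ hM
      linarith
    · apply le_of_sphere (qf_smul S) (fun c x => by rw [qf_smul]; ring)
      · intro x hx
        have hxne : x ≠ 0 := by
          intro h; rw [h] at hx; simpa using (Metric.mem_sphere.mp hx)
        have h1 : qf S x ≤ qf Q x - δ := by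
          have := ha x hx; simp only [hδdef, Pi.sub_apply] at *; linarith
        have h2 : qf Q x ≤ M := hb x hx
        have h4 : (δ / M) * qf Q x ≤ δ := by
          rw [div_mul_eq_mul_div, div_le_iff₀ hM]
          exact mul_le_mul_of_nonneg_left h2 hδ.le
        have h5 : (1 - δ / M) * qf Q x = qf Q x - (δ / M) * qf Q x := by ring
        linarith
      · simp [qf]

lemma exists_lower (Q : Matrix (Fin n) (Fin n) ℝ)
    (hQ : ∀ x : Fin n → ℝ, x ≠ 0 → 0 < qf Q x) :
    ∃ C : ℝ, 0 ≤ C ∧ ∀ x : Fin n → ℝ, ∑ i, (x i) ^ 2 ≤ C * qf Q x := by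
  rcases Nat.eq_zero_or_pos n with hn | hn
  · refine ⟨0, le_refl _, fun x => ?_⟩
    have : (Finset.univ : Finset (Fin n)) = ∅ := by
      apply Finset.univ_eq_empty_iff.mpr
      exact ⟨fun i => absurd i.2 (by omega)⟩
    simp [this]
  · have hne : Nonempty (Fin n) := ⟨⟨0, hn⟩⟩
    have : Nontrivial (Fin n → ℝ) := by infer_instance
    have hsc : IsCompact (Metric.sphere (0 : Fin n → ℝ) 1) := isCompact_sphere _ _
    have hsne : (Metric.sphere (0 : Fin n → ℝ) 1).Nonempty :=
      NormedSpace.sphere_nonempty.mpr zero_le_one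
    obtain ⟨a, has, ha'⟩ := hsc.exists_isMinOn hsne (continuous_qf Q).continuousOn
    have ha := isMinOn_iff.mp ha'
    have hane : a ≠ 0 := by
      intro h; rw [h] at has; simpa using (Metric.mem_sphere.mp has)
    have hm : 0 < qf Q a := hQ a hane
    set m := qf Q a with hmdef
    refine ⟨n / m, div_nonneg (Nat.cast_nonneg n) hm.le, ?_⟩
    apply le_of_sphere (f := fun x => ∑ i, (x i) ^ 2)
      (g := fun x => (n / m) * qf Q x)
      (fun c x => by
        simp only [Pi.smul_apply, smul_eq_mul, mul_pow, Finset.mul_sum])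
      (fun c x => by
        show (n : ℝ) / m * qf Q (c • x) = c ^ 2 * ((n : ℝ) / m * qf Q x)
        rw [qf_smul]; ring)
    · intro x hx
      have hx1 : ‖x‖ = 1 := by simpa using (Metric.mem_sphere.mp hx)
      have h1 : ∑ i, (x i) ^ 2 ≤ (n : ℝ) := by
        calc ∑ i, (x i) ^ 2 ≤ ∑ _i : Fin n, (1 : ℝ) := by
              apply Finset.sum_le_sum
              intro i _
              have := norm_le_pi_norm x i
              rw [hx1, Real.norm_eq_abs] at this
              nlinarith [abs_nonneg (x i), sq_abs (x i)]
          _ = (n : ℝ) := by simp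
      have h2 : (n : ℝ) ≤ (n / m) * qf Q x := by
        have := ha x hx
        calc (n : ℝ) = (n / m) * m := by field_simp
          _ ≤ (n / m) * qf Q x :=
            mul_le_mul_of_nonneg_left this (div_nonneg (Nat.cast_nonneg n) hm.le)
      linarith
    · simp [qf]

end SwitchedAux


open SwitchedAux in
/-- Mean-square stability of the random switched linear system: at each step, with
probability `q` the dropout matrix `A₀` acts, and with probability `(1−q)·pⱼ` the matrix
`Aⱼ` acts; the i.i.d. switching indices are independent of the square-integrable initial
state.  If a common symmetric positive-definite `Q` satisfies the two Lyapunov LMIs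
`A₀ᵀQA₀ − Q < 0` and `Σⱼ pⱼ·AⱼᵀQAⱼ − Q < 0`, then `E[‖X_k‖²] → 0`. -/
theorem switched_system_mean_square_stable {n l : ℕ} {Ω : Type*} [MeasurableSpace Ω]
    (μ : Measure Ω) [IsProbabilityMeasure μ]
    (A₀ : Matrix (Fin n) (Fin n) ℝ) (A : Fin l → Matrix (Fin n) (Fin n) ℝ)
    (q : ℝ) (hq : q ∈ Set.Icc (0 : ℝ) 1)
    (p : Fin l → ℝ) (hp : ∀ j, 0 ≤ p j) (hpsum : ∑ j, p j = 1)
    -- the random switching indices: value `0` means dropout (matrix `A₀`),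
    -- value `j.succ` means delay grid point `j` (matrix `A j`)
    (ι : ℕ → Ω → Fin (l + 1)) (hιmeas : ∀ k, Measurable (ι k))
    (hι0 : ∀ k, μ (ι k ⁻¹' {0}) = ENNReal.ofReal q)
    (hιj : ∀ k, ∀ j : Fin l, μ (ι k ⁻¹' {j.succ}) = ENNReal.ofReal ((1 - q) * p j))
    -- the indices are mutually independent ...
    (hiid : iIndepFun ι μ)
    -- ... and the whole index sequence is independent of the initial state
    (X : ℕ → Ω → Fin n → ℝ)
    (hX0 : MemLp (X 0) 2 μ) (hX0meas : Measurable (X 0))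
    (hindep : IndepFun (fun ω => fun k => ι k ω) (X 0) μ)
    -- the switched dynamics
    (hrec : ∀ k ω, X (k + 1) ω =
      (Fin.cases A₀ A (ι k ω) : Matrix (Fin n) (Fin n) ℝ).mulVec (X k ω))
    (Q : Matrix (Fin n) (Fin n) ℝ) (hQsymm : Q.IsSymm)
    (hQpos : ∀ x : Fin n → ℝ, x ≠ 0 → 0 < x ⬝ᵥ Q.mulVec x)
    (hneg0 : ∀ x : Fin n → ℝ, x ≠ 0 → x ⬝ᵥ (A₀ᵀ * Q * A₀ - Q).mulVec x < 0)
    (hneg1 : ∀ x : Fin n → ℝ, x ≠ 0 →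
      x ⬝ᵥ ((∑ j, p j • ((A j)ᵀ * Q * A j)) - Q).mulVec x < 0) :
    Filter.Tendsto (fun k => ∫ ω, ∑ i, (X k ω i) ^ 2 ∂μ) Filter.atTop (nhds 0) := by
  classical
  set Mv : Fin (l + 1) → Matrix (Fin n) (Fin n) ℝ := fun v => Fin.cases A₀ A v with hMv
  set cv : Fin (l + 1) → ℝ := fun v => Fin.cases q (fun j => (1 - q) * p j) v with hcv
  set S : Matrix (Fin n) (Fin n) ℝ := ∑ v, cv v • ((Mv v)ᵀ * Q * Mv v) with hSdef
  -- basic facts on the quadratic forms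
  have hQpos' : ∀ x : Fin n → ℝ, x ≠ 0 → 0 < qf Q x := fun x hx => hQpos x hx
  have hQnn : ∀ x : Fin n → ℝ, 0 ≤ qf Q x := by
    intro x
    rcases eq_or_ne x 0 with rfl | hx
    · simp [qf]
    · exact (hQpos' x hx).le
  have hcn : ∀ v, 0 ≤ cv v := by
    intro v
    induction v using Fin.cases with
    | zero => simpa [hcv] using hq.1
    | succ j => simpa [hcv] using mul_nonneg (by linarith [hq.2]) (hp j)
  have hμv : ∀ k v, μ (ι k ⁻¹' {v}) = ENNReal.ofReal (cv v) := by
    intro k v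
    induction v using Fin.cases with
    | zero => simpa [hcv] using hι0 k
    | succ j => simpa [hcv] using hιj k j
  -- S-form decomposition
  have hSform : ∀ x, qf S x =
      q * qf (A₀ᵀ * Q * A₀) x + (1 - q) * ∑ j, p j * qf ((A j)ᵀ * Q * A j) x := by
    intro x
    rw [hSdef, qf_sum, Fin.sum_univ_succ]
    simp only [hcv, hMv, Fin.cases_zero, Fin.cases_succ]
    rw [Finset.mul_sum]
    congr 1
    apply Finset.sum_congr rfl
    intro j _
    ring
  have hS0 : ∀ x, 0 ≤ qf S x := by
    intro x
    rw [hSdef, qf_sum]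
    apply Finset.sum_nonneg
    intro v _
    rw [qf_conj]
    exact mul_nonneg (hcn v) (hQnn _)
  have hSlt : ∀ x : Fin n → ℝ, x ≠ 0 → qf S x < qf Q x := by
    intro x hx
    have ha : qf (A₀ᵀ * Q * A₀) x < qf Q x := by
      have := hneg0 x hx
      have h2 : qf (A₀ᵀ * Q * A₀ - Q) x < 0 := this
      rw [qf_sub] at h2; linarith
    have hb : ∑ j, p j * qf ((A j)ᵀ * Q * A j) x < qf Q x := by
      have := hneg1 x hx
      have h2 : qf ((∑ j, p j • ((A j)ᵀ * Q * A j)) - Q) x < 0 := this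
      rw [qf_sub, qf_sum] at h2; linarith
    rw [hSform]
    rcases lt_or_eq_of_le hq.2 with h | h
    · have h1 : q * qf (A₀ᵀ * Q * A₀) x ≤ q * qf Q x :=
        mul_le_mul_of_nonneg_left ha.le hq.1
      have h2 : (1 - q) * (∑ j, p j * qf ((A j)ᵀ * Q * A j) x) < (1 - q) * qf Q x :=
        mul_lt_mul_of_pos_left hb (by linarith)
      nlinarith
    · rw [h]; simpa using ha
  obtain ⟨ρ, hρ0, hρ1, hρ⟩ := exists_ratio S Q hQpos' hS0 hSlt
  obtain ⟨C, hC0, hC⟩ := exists_lower Q hQpos'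
  -- measurability structure
  set seq : Ω → ℕ → Fin (l + 1) := fun ω => fun k => ι k ω with hseqdef
  have hseqmeas : Measurable seq := measurable_pi_lambda _ hιmeas
  set mB : ℕ → MeasurableSpace Ω :=
    fun k => ⨆ i ∈ Set.Iio k, MeasurableSpace.comap (ι i) inferInstance with hmBdef
  set 𝔪 : ℕ → MeasurableSpace Ω :=
    fun k => mB k ⊔ MeasurableSpace.comap (X 0) inferInstance with h𝔪def
  have hcomap_seq : ∀ i, MeasurableSpace.comap (ι i) inferInstance ≤
      MeasurableSpace.comap seq MeasurableSpace.pi := by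
    intro i
    have h1 : (MeasurableSpace.comap (ι i) inferInstance : MeasurableSpace Ω) =
        MeasurableSpace.comap seq
          (MeasurableSpace.comap (fun v : ℕ → Fin (l + 1) => v i) inferInstance) := by
      rw [MeasurableSpace.comap_comp]
      rfl
    rw [h1]
    exact MeasurableSpace.comap_mono (measurable_iff_comap_le.mp (measurable_pi_apply i))
  have hmB_seq : ∀ k, mB k ≤ MeasurableSpace.comap seq MeasurableSpace.pi :=
    fun k => iSup₂_le fun i _ => hcomap_seq i
  have hmB_amb : ∀ k, mB k ≤ (inferInstance : MeasurableSpace Ω) :=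
    fun k => iSup₂_le fun i _ => measurable_iff_comap_le.mp (hιmeas i)
  have hmC_amb : MeasurableSpace.comap (X 0) inferInstance ≤ (inferInstance : MeasurableSpace Ω) :=
    measurable_iff_comap_le.mp hX0meas
  have h𝔪_amb : ∀ k, 𝔪 k ≤ (inferInstance : MeasurableSpace Ω) := fun k => sup_le (hmB_amb k) hmC_amb
  have hii : iIndep (fun i => MeasurableSpace.comap (ι i) inferInstance) μ :=
    (iIndepFun_iff_iIndep _ _ _).mp hiid
  have Indep1 : ∀ k, Indep (MeasurableSpace.comap (ι k) inferInstance) (mB k) μ := by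
    intro k
    have hd : Disjoint ({k} : Set ℕ) (Set.Iio k) := by
      rw [Set.disjoint_singleton_left]
      simp
    have := indep_iSup_of_disjoint
      (fun i => measurable_iff_comap_le.mp (hιmeas i)) hii hd
    simpa [hmBdef] using this
  have IndepSeq : Indep (MeasurableSpace.comap seq MeasurableSpace.pi)
      (MeasurableSpace.comap (X 0) inferInstance) μ :=
    (IndepFun_iff_Indep _ _ _).mp hindep
  have IndepKey : ∀ k, Indep (MeasurableSpace.comap (ι k) inferInstance) (𝔪 k) μ := by
    intro k
    set p2 : Set (Set Ω) :=
      {t | ∃ B C, MeasurableSet[mB k] B ∧ MeasurableSet[MeasurableSpace.comap (X 0) inferInstance] C ∧ t = B ∩ C} with hp2def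
    have hgen2 : 𝔪 k = MeasurableSpace.generateFrom p2 := by
      apply le_antisymm
      · apply sup_le
        · intro s hs
          exact MeasurableSpace.measurableSet_generateFrom
            ⟨s, Set.univ, hs, MeasurableSet.univ, (Set.inter_univ s).symm⟩
        · intro s hs
          exact MeasurableSpace.measurableSet_generateFrom
            ⟨Set.univ, s, MeasurableSet.univ, hs, (Set.univ_inter s).symm⟩
      · apply MeasurableSpace.generateFrom_le
        rintro t ⟨B, C, hB, hC, rfl⟩
        have hB' : MeasurableSet[𝔪 k] B := (le_sup_left : mB k ≤ 𝔪 k) B hB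
        have hC' : MeasurableSet[𝔪 k] C := (le_sup_right : MeasurableSpace.comap (X 0) inferInstance ≤ 𝔪 k) C hC
        exact hB'.inter hC'
    have hp2 : IsPiSystem p2 := by
      rintro t1 ⟨B1, C1, hB1, hC1, rfl⟩ t2 ⟨B2, C2, hB2, hC2, rfl⟩ _
      exact ⟨B1 ∩ B2, C1 ∩ C2, hB1.inter hB2, hC1.inter hC2,
        by rw [Set.inter_inter_inter_comm]⟩
    apply IndepSets.indep (measurable_iff_comap_le.mp (hιmeas k)) (h𝔪_amb k)
      (@MeasurableSpace.isPiSystem_measurableSet Ω (MeasurableSpace.comap (ι k) inferInstance))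
      hp2 (@MeasurableSpace.generateFrom_measurableSet Ω
        (MeasurableSpace.comap (ι k) inferInstance)).symm hgen2
    rw [IndepSets_iff]
    rintro t1 t2 ht1 ⟨B, C, hB, hC, rfl⟩
    have ht1' : MeasurableSet[MeasurableSpace.comap seq MeasurableSpace.pi] t1 :=
      hcomap_seq k t1 ht1
    have hB' : MeasurableSet[MeasurableSpace.comap seq MeasurableSpace.pi] B :=
      hmB_seq k B hB
    have hI2 := (Indep_iff _ _ _).mp IndepSeq
    have hI1 := (Indep_iff _ _ _).mp (Indep1 k)
    have e1 : μ (t1 ∩ B ∩ C) = μ (t1 ∩ B) * μ C := hI2 _ _ (ht1'.inter hB') hC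
    have e2 : μ (t1 ∩ B) = μ t1 * μ B := hI1 _ _ ht1 hB
    have e3 : μ (B ∩ C) = μ B * μ C := hI2 _ _ hB' hC
    rw [← Set.inter_assoc, e1, e2, e3]
    ring
  -- measurability of X k with respect to 𝔪 k
  have hmBmono : ∀ k, mB k ≤ mB (k + 1) := by
    intro k
    apply biSup_mono
    intro i hi
    exact lt_of_lt_of_le hi (Nat.le_succ k)
  have XmeasM : ∀ k, Measurable[𝔪 k] (X k) := by
    intro k
    induction k with
    | zero => exact measurable_iff_comap_le.mpr le_sup_right
    | succ k ih =>
      have h𝔪mono : 𝔪 k ≤ 𝔪 (k + 1) := sup_le_sup_right (hmBmono k) _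
      have hXk : Measurable[𝔪 (k + 1)] (X k) := ih.mono h𝔪mono le_rfl
      have hιk : Measurable[𝔪 (k + 1)] (ι k) := by
        refine measurable_iff_comap_le.mpr (le_trans ?_ le_sup_left)
        exact le_iSup₂ (f := fun i (_ : i ∈ Set.Iio (k + 1)) =>
          MeasurableSpace.comap (ι i) inferInstance) k (Nat.lt_succ_self k)
      have hXe : X (k + 1) = fun ω => (Mv (ι k ω)).mulVec (X k ω) := funext (hrec k)
      rw [hXe]
      letI : MeasurableSpace Ω := 𝔪 (k + 1)
      apply measurable_pi_lambda
      intro i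
      have he : (fun ω => (Mv (ι k ω)).mulVec (X k ω) i) =
          fun ω => ∑ j, Mv (ι k ω) i j * X k ω j := rfl
      rw [he]
      apply Finset.measurable_sum
      intro j _
      have h1 : Measurable[𝔪 (k + 1)] fun ω => Mv (ι k ω) i j :=
        (measurable_from_top (f := fun v : Fin (l + 1) => Mv v i j)).comp hιk
      exact h1.mul ((measurable_pi_apply j).comp hXk)
  have Xmeas : ∀ k, Measurable (X k) := fun k => (XmeasM k).mono (h𝔪_amb k) le_rfl
  have IndepXk : ∀ k, IndepFun (ι k) (X k) μ := by
    intro k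
    rw [IndepFun_iff_Indep, Indep_iff]
    intro t1 t2 ht1 ht2
    have ht2' : MeasurableSet[𝔪 k] t2 := measurable_iff_comap_le.mp (XmeasM k) t2 ht2
    exact (Indep_iff _ _ _).mp (IndepKey k) t1 t2 ht1 ht2'
  -- integrability
  have L2 : ∀ k, MemLp (X k) 2 μ := by
    intro k
    induction k with
    | zero => exact hX0
    | succ k ih =>
      apply MemLp.of_le_mul (c := ∑ v, ∑ i, ∑ j, |Mv v i j|) ih
        (Xmeas (k + 1)).aestronglyMeasurable
      filter_upwards with ω
      rw [hrec k ω]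
      have hle : ‖(Mv (ι k ω)).mulVec (X k ω)‖ ≤
          (∑ i, ∑ j, |Mv (ι k ω) i j|) * ‖X k ω‖ := norm_mulVec_le _ _
      refine hle.trans (mul_le_mul_of_nonneg_right ?_ (norm_nonneg _))
      exact Finset.single_le_sum (f := fun v => ∑ i, ∑ j, |Mv v i j|)
        (fun v _ => Finset.sum_nonneg fun i _ => Finset.sum_nonneg fun j _ => abs_nonneg _)
        (Finset.mem_univ (ι k ω))
  have compL2 : ∀ k i, MemLp (fun ω => X k ω i) 2 μ := by
    intro k i
    apply MemLp.of_le (L2 k) ((measurable_pi_apply i).comp (Xmeas k)).aestronglyMeasurable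
    filter_upwards with ω
    exact norm_le_pi_norm (X k ω) i
  have sumsq_int : ∀ k, Integrable (fun ω => ∑ i, (X k ω i) ^ 2) μ :=
    fun k => integrable_finset_sum _ fun i _ => (compL2 k i).integrable_sq
  have quad_int : ∀ (k : ℕ) (B : Matrix (Fin n) (Fin n) ℝ),
      Integrable (fun ω => qf B (X k ω)) μ := by
    intro k B
    apply Integrable.mono' ((sumsq_int k).const_mul (∑ i, ∑ j, |B i j|))
      (((continuous_qf B).measurable.comp (Xmeas k)).aestronglyMeasurable)
    filter_upwards with ω
    rw [Real.norm_eq_abs]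
    exact abs_qf_le B (X k ω)
  -- the one-step identity
  have step : ∀ k, (∫ ω, qf Q (X (k + 1) ω) ∂μ) = ∫ ω, qf S (X k ω) ∂μ := by
    intro k
    have hpt : ∀ ω, qf Q (X (k + 1) ω) =
        ∑ v, (if ι k ω = v then (1 : ℝ) else 0) * qf ((Mv v)ᵀ * Q * Mv v) (X k ω) := by
      intro ω
      have h1 : qf Q (X (k + 1) ω) = qf ((Mv (ι k ω))ᵀ * Q * Mv (ι k ω)) (X k ω) := by
        rw [hrec k ω, qf_conj]
      rw [h1]
      symm
      calc ∑ v, (if ι k ω = v then (1 : ℝ) else 0) * qf ((Mv v)ᵀ * Q * Mv v) (X k ω)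
          = ∑ v, (if ι k ω = v then qf ((Mv v)ᵀ * Q * Mv v) (X k ω) else 0) := by
            apply Finset.sum_congr rfl
            intro v _
            by_cases h : ι k ω = v <;> simp [h]
        _ = qf ((Mv (ι k ω))ᵀ * Q * Mv (ι k ω)) (X k ω) := by
            rw [Finset.sum_ite_eq]
            simp
    have hint : ∀ v : Fin (l + 1), Integrable
        (fun ω => (if ι k ω = v then (1 : ℝ) else 0) * qf ((Mv v)ᵀ * Q * Mv v) (X k ω)) μ := by
      intro v
      apply Integrable.bdd_mul (c := 1) (quad_int k _)
      · apply Measurable.aestronglyMeasurable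
        exact (measurable_from_top (f := fun u : Fin (l + 1) =>
          if u = v then (1 : ℝ) else 0)).comp (hιmeas k)
      · exact Filter.Eventually.of_forall fun ω => by by_cases h : ι k ω = v <;> simp [h]
    have hprod : ∀ v : Fin (l + 1),
        (∫ ω, (if ι k ω = v then (1 : ℝ) else 0) * qf ((Mv v)ᵀ * Q * Mv v) (X k ω) ∂μ)
          = cv v * ∫ ω, qf ((Mv v)ᵀ * Q * Mv v) (X k ω) ∂μ := by
      intro v
      have hIF : IndepFun (fun ω => if ι k ω = v then (1 : ℝ) else 0)
          (fun ω => qf ((Mv v)ᵀ * Q * Mv v) (X k ω)) μ := by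
        apply (IndepXk k).comp
          (measurable_from_top (f := fun u : Fin (l + 1) => if u = v then (1 : ℝ) else 0))
          (continuous_qf _).measurable
      have hind_int : Integrable (fun ω => if ι k ω = v then (1 : ℝ) else 0) μ := by
        have he : (fun ω => if ι k ω = v then (1 : ℝ) else 0) =
            (ι k ⁻¹' {v}).indicator (fun _ => (1 : ℝ)) := by
          funext ω
          simp [Set.indicator_apply]
        rw [he]
        exact (integrable_const (1 : ℝ)).indicator (hιmeas k (measurableSet_singleton v))
      have := hIF.integral_mul_eq_mul_integral hind_int.aestronglyMeasurable (quad_int k _).aestronglyMeasurable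
      have heq : (∫ ω, (if ι k ω = v then (1 : ℝ) else 0) * qf ((Mv v)ᵀ * Q * Mv v) (X k ω) ∂μ)
          = (∫ ω, (if ι k ω = v then (1 : ℝ) else 0) ∂μ) *
            ∫ ω, qf ((Mv v)ᵀ * Q * Mv v) (X k ω) ∂μ := this
      rw [heq]
      congr 1
      have he : (fun ω => if ι k ω = v then (1 : ℝ) else 0) =
          (ι k ⁻¹' {v}).indicator (fun _ => (1 : ℝ)) := by
        funext ω
        simp [Set.indicator_apply]
      rw [he, integral_indicator_const (1 : ℝ) (hιmeas k (measurableSet_singleton v)),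
        measureReal_def, hμv k v, smul_eq_mul, mul_one, ENNReal.toReal_ofReal (hcn v)]
    calc (∫ ω, qf Q (X (k + 1) ω) ∂μ)
        = ∫ ω, ∑ v, (if ι k ω = v then (1 : ℝ) else 0) *
            qf ((Mv v)ᵀ * Q * Mv v) (X k ω) ∂μ := integral_congr_ae (Filter.Eventually.of_forall hpt)
      _ = ∑ v, ∫ ω, (if ι k ω = v then (1 : ℝ) else 0) *
            qf ((Mv v)ᵀ * Q * Mv v) (X k ω) ∂μ := integral_finset_sum _ fun v _ => hint v
      _ = ∑ v, cv v * ∫ ω, qf ((Mv v)ᵀ * Q * Mv v) (X k ω) ∂μ :=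
            Finset.sum_congr rfl fun v _ => hprod v
      _ = ∑ v, ∫ ω, cv v * qf ((Mv v)ᵀ * Q * Mv v) (X k ω) ∂μ :=
            Finset.sum_congr rfl fun v _ => (integral_const_mul _ _).symm
      _ = ∫ ω, ∑ v, cv v * qf ((Mv v)ᵀ * Q * Mv v) (X k ω) ∂μ :=
            (integral_finset_sum _ fun v _ => (quad_int k _).const_mul _).symm
      _ = ∫ ω, qf S (X k ω) ∂μ := by
            apply integral_congr_ae
            filter_upwards with ω
            rw [hSdef, qf_sum]
  -- the Lyapunov recursion
  have hWstep : ∀ k, (∫ ω, qf Q (X (k + 1) ω) ∂μ) ≤ ρ * ∫ ω, qf Q (X k ω) ∂μ := by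
    intro k
    rw [step k, ← integral_const_mul]
    exact integral_mono (quad_int k S) ((quad_int k Q).const_mul ρ) fun ω => hρ (X k ω)
  have hWk : ∀ k, (∫ ω, qf Q (X k ω) ∂μ) ≤ ρ ^ k * ∫ ω, qf Q (X 0 ω) ∂μ := by
    intro k
    induction k with
    | zero => simp
    | succ k ih =>
      calc (∫ ω, qf Q (X (k + 1) ω) ∂μ) ≤ ρ * ∫ ω, qf Q (X k ω) ∂μ := hWstep k
        _ ≤ ρ * (ρ ^ k * ∫ ω, qf Q (X 0 ω) ∂μ) := mul_le_mul_of_nonneg_left ih hρ0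
        _ = ρ ^ (k + 1) * ∫ ω, qf Q (X 0 ω) ∂μ := by ring
  -- conclude
  have hfin : ∀ k, (∫ ω, ∑ i, (X k ω i) ^ 2 ∂μ) ≤
      (C * ∫ ω, qf Q (X 0 ω) ∂μ) * ρ ^ k := by
    intro k
    calc (∫ ω, ∑ i, (X k ω i) ^ 2 ∂μ) ≤ ∫ ω, C * qf Q (X k ω) ∂μ :=
          integral_mono (sumsq_int k) ((quad_int k Q).const_mul C) fun ω => hC (X k ω)
      _ = C * ∫ ω, qf Q (X k ω) ∂μ := integral_const_mul _ _
      _ ≤ C * (ρ ^ k * ∫ ω, qf Q (X 0 ω) ∂μ) := mul_le_mul_of_nonneg_left (hWk k) hC0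
      _ = (C * ∫ ω, qf Q (X 0 ω) ∂μ) * ρ ^ k := by ring
  apply squeeze_zero (fun k => integral_nonneg fun ω => Finset.sum_nonneg fun i _ => sq_nonneg _)
    hfin
  have := (tendsto_pow_atTop_nhds_zero_of_lt_one hρ0 hρ1).const_mul
    (C * ∫ ω, qf Q (X 0 ω) ∂μ)
  simpa using this
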